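/- arXiv:0706.0377 — 2 statements merged into one kernel-verified Lean document; each statement's English description precedes it below -/
import Mathlib

section
/- Let R be a commutative ring, M an R-module, and ψ₁,…,ψ_r ∈ Hom_R(M,R). Let ψ = ψ₁ ⊕ ⋯ ⊕ ψ_r : M → R^r and let Ψ = ψ₁ ∧ ⋯ ∧ ψ_r : ⋀^{r+1} M → M be the map defined by iterated contraction, i.e. Ψ(m₁ ∧ ⋯ ∧ m_{r+1}) = Σ_i Σ_σ (−1)^i sign(σ) · ψ₁(m_{σ(1)})⋯ψ_{i−1}(m_{σ(i−1)})·ψ_i(m_{σ(i+1)})⋯ψ_r(m_{σ(r+1)}) · m_i, where σ runs over permutations of {1,…,r+1} fixing i. Then the image of Ψ is contained in the kernel of ψ, i.e. ψ_s(Ψ(m₁ ∧ ⋯ ∧ m_{r+1})) = 0 for every s = 1,…,r and all m₁,…,m_{r+1} ∈ M. -/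
/-- The iterated contraction `Ψ = ψ₁ ∧ ⋯ ∧ ψ_r : ⋀^{r+1} M → M`, evaluated on the pure
wedge `m₁ ∧ ⋯ ∧ m_{r+1}`, given by the explicit formula
`Ψ(m₁ ∧ ⋯ ∧ m_{r+1}) = Σ_i Σ_σ (−1)^i sign(σ) · ψ₁(m_{σ(1)})⋯ψ_{i−1}(m_{σ(i−1)})·
ψ_i(m_{σ(i+1)})⋯ψ_r(m_{σ(r+1)}) · m_i`, where `σ` runs over the permutations of
`{1,…,r+1}` fixing `i`. -/
noncomputable def iterContraction {R : Type*} [CommRing R] {M : Type*} [AddCommGroup M]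
    [Module R M] {r : ℕ} (ψ : Fin r → (M →ₗ[R] R)) (m : Fin (r + 1) → M) : M :=
  ∑ i : Fin (r + 1), ∑ σ : {σ : Equiv.Perm (Fin (r + 1)) // σ i = i},
    (((-1 : ℤ) ^ ((i : ℕ) + 1) * (Equiv.Perm.sign σ.1 : ℤ)) •
      ((∏ j : Fin r, ψ j (m (σ.1 (i.succAbove j)))) • m i))

/-- The image of the iterated contraction `Ψ = ψ₁ ∧ ⋯ ∧ ψ_r` is contained in the kernel of
`ψ = ψ₁ ⊕ ⋯ ⊕ ψ_r : M → R^r`: each `ψ_s` kills every value of `Ψ` on pure wedges. -/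
theorem contraction_image_subset_ker {R : Type*} [CommRing R] {M : Type*} [AddCommGroup M]
    [Module R M] (r : ℕ) (ψ : Fin r → (M →ₗ[R] R)) (s : Fin r) (m : Fin (r + 1) → M) :
    ψ s (iterContraction ψ m) = 0 := by
  classical
  -- the matrix whose `l`-th row is `(ψ' k (m l))_k`, where `ψ' = (ψ s, ψ 0, …, ψ (r-1))`
  set ψ' : Fin (r + 1) → (M →ₗ[R] R) := Fin.cons (ψ s) ψ with hψ'
  set A : Matrix (Fin (r + 1)) (Fin (r + 1)) R := fun l k => ψ' k (m l) with hA
  -- columns `0` and `s.succ` of `A` coincide, so `det A = 0`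
  have hdet : A.det = 0 := by
    refine Matrix.det_zero_of_column_eq (i := 0) (j := s.succ) ?_ fun k => ?_
    · exact (Fin.succ_ne_zero s).symm
    · simp [hA, hψ']
  -- the key identity: `ψ s (Ψ m) = - det A`
  have key : ψ s (iterContraction ψ m) = -A.det := by
    rw [Matrix.det_apply']
    rw [← Fintype.sum_fiberwise (fun τ : Equiv.Perm (Fin (r + 1)) => τ 0)
      (fun τ => ((Equiv.Perm.sign τ : ℤ) : R) * ∏ l, A (τ l) l)]
    rw [iterContraction, map_sum, ← Finset.sum_neg_distrib]
    refine Finset.sum_congr rfl fun i _ => ?_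
    rw [map_sum, ← Finset.sum_neg_distrib]
    -- reindex the fiber `{τ // τ 0 = i}` by `{σ // σ i = i}` via `τ = σ * (cycleRange i)⁻¹`
    refine Fintype.sum_equiv
      ((Equiv.mulRight (Fin.cycleRange i)⁻¹).subtypeEquiv fun σ => ?_) _ _ fun σ => ?_
    · simp [Equiv.Perm.mul_apply, Equiv.Perm.inv_def]
    obtain ⟨σ, hσ⟩ := σ
    show _ = -(((Equiv.Perm.sign (σ * (Fin.cycleRange i)⁻¹) : ℤ) : R) *
      ∏ l, A ((σ * (Fin.cycleRange i)⁻¹) l) l)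
    have hsign : Equiv.Perm.sign (σ * (Fin.cycleRange i)⁻¹) =
        Equiv.Perm.sign σ * (-1) ^ (i : ℕ) := by
      simp [Fin.sign_cycleRange]
    have hprod : ∏ l, A ((σ * (Fin.cycleRange i)⁻¹) l) l =
        ψ s (m i) * ∏ j : Fin r, ψ j (m (σ (i.succAbove j))) := by
      rw [Fin.prod_univ_succ]
      congr 1
      · simp [hA, hψ', Equiv.Perm.mul_apply, Equiv.Perm.inv_def, hσ]
      · refine Finset.prod_congr rfl fun j _ => ?_
        simp [hA, hψ', Equiv.Perm.mul_apply, Equiv.Perm.inv_def]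
    rw [hsign, hprod, map_zsmul, map_smul, smul_eq_mul]
    simp only [zsmul_eq_mul]
    push_cast
    rw [pow_succ]
    ring
  rw [key, hdet, neg_zero]
end

section
/- Let R be a commutative ring and M = A ⊕ B a direct sum of R-modules where B is free of rank r with basis b₁,…,b_r. Let ψ₁,…,ψ_r ∈ Hom_R(M,R) be the maps that kill A and are dual to the basis of B (ψ_i(b_j) = δ_{ij}). Then the iterated contraction Ψ = ψ₁∧⋯∧ψ_r : ⋀^{r+1}M → M maps ⋀^{r+1}M surjectively onto A; in particular, under the canonical decomposition ⋀^{r+1}M ≅ ⊕_{p+q=r+1} (⋀^p A ⊗ ⋀^q B), Ψ carries the summand A ⊗ ⋀^r B isomorphically onto A (up to sign) and kills all other summands. -/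
open Equiv Finset

noncomputable def fixEquiv {r : ℕ} (i : Fin (r + 1)) :
    Equiv.Perm (Fin r) ≃ {σ : Equiv.Perm (Fin (r + 1)) // σ i = i} where
  toFun τ := ⟨τ.extendDomain (finSuccAboveEquiv i),
    Equiv.Perm.extendDomain_apply_not_subtype _ _ (by simp)⟩
  invFun σ := (finSuccAboveEquiv i).symm.permCongr
    (σ.1.subtypePerm (fun x => by
      constructor
      · intro hx hc
        exact hx (by rw [hc, σ.2])
      · intro hx hc
        exact hx (σ.1.injective (by rw [hc, σ.2]))))
  left_inv τ := by
    apply Equiv.ext; intro j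
    apply (finSuccAboveEquiv i).injective
    simp only [Equiv.permCongr_apply, Equiv.symm_symm, Equiv.Perm.subtypePerm_apply,
      Equiv.apply_symm_apply]
    exact Subtype.ext (Equiv.Perm.extendDomain_apply_image τ _ j)
  right_inv σ := by
    apply Subtype.ext; apply Equiv.ext; intro x
    by_cases hx : x = i
    · subst hx
      rw [Equiv.Perm.extendDomain_apply_not_subtype _ _ (by simp), σ.2]
    · rw [Equiv.Perm.extendDomain_apply_subtype _ (finSuccAboveEquiv i) hx]
      simp [Equiv.permCongr_apply]

theorem fixEquiv_sign {r : ℕ} (i : Fin (r + 1)) (τ : Equiv.Perm (Fin r)) :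
    Equiv.Perm.sign ((fixEquiv i τ).1) = Equiv.Perm.sign τ :=
  Equiv.Perm.sign_extendDomain τ _

theorem fixEquiv_apply_succAbove {r : ℕ} (i : Fin (r + 1)) (τ : Equiv.Perm (Fin r))
    (j : Fin r) : (fixEquiv i τ).1 (i.succAbove j) = i.succAbove (τ j) :=
  Equiv.Perm.extendDomain_apply_image τ _ j

theorem sum_fix_eq_det {R : Type*} [CommRing R] {r : ℕ} (i : Fin (r + 1))
    (g : Fin (r + 1) → Fin r → R) :
    ∑ σ : {σ : Equiv.Perm (Fin (r + 1)) // σ i = i},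
        ((Equiv.Perm.sign σ.1 : ℤ) : R) * ∏ j : Fin r, g (σ.1 (i.succAbove j)) j
      = (Matrix.of fun k j => g (i.succAbove k) j).det := by
  rw [Matrix.det_apply']
  refine (Fintype.sum_equiv (fixEquiv i) _ _ fun τ => ?_).symm
  rw [fixEquiv_sign]
  congr 1
  refine Finset.prod_congr rfl fun j _ => ?_
  rw [fixEquiv_apply_succAbove]
  rfl

theorem iterContraction_eq {R : Type*} [CommRing R] {A : Type*} [AddCommGroup A] [Module R A]
    {r : ℕ} (ψ : Fin r → ((A × (Fin r → R)) →ₗ[R] R))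
    (hψ : ∀ i, ψ i = (LinearMap.proj i) ∘ₗ (LinearMap.snd R A (Fin r → R)))
    (m : Fin (r + 1) → A × (Fin r → R)) :
    iterContraction ψ m = ∑ i : Fin (r + 1),
      ((-1 : R) ^ ((i : ℕ) + 1) *
        (Matrix.of fun k j => (m (i.succAbove k)).2 j).det) • m i := by
  unfold iterContraction
  refine Finset.sum_congr rfl fun i _ => ?_
  have step : ∀ σ : {σ : Equiv.Perm (Fin (r + 1)) // σ i = i},
      (((-1 : ℤ) ^ ((i : ℕ) + 1) * (Equiv.Perm.sign σ.1 : ℤ)) •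
        ((∏ j : Fin r, ψ j (m (σ.1 (i.succAbove j)))) • m i))
      = ((-1 : R) ^ ((i : ℕ) + 1) * (((Equiv.Perm.sign σ.1 : ℤ) : R) *
          ∏ j : Fin r, (m (σ.1 (i.succAbove j))).2 j)) • m i := by
    intro σ
    rw [← Int.cast_smul_eq_zsmul R, smul_smul]
    congr 1
    have : ∀ j : Fin r, ψ j (m (σ.1 (i.succAbove j))) = (m (σ.1 (i.succAbove j))).2 j := by
      intro j; rw [hψ j]; rfl
    simp only [this]
    push_cast
    ring
  rw [Finset.sum_congr rfl (fun σ _ => step σ), ← Finset.sum_smul, ← Finset.mul_sum,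
    sum_fix_eq_det i (fun x j => (m x).2 j)]

/-- Let `M = A ⊕ B` with `B` free of rank `r` (realized as `B = R^r` with its standard
basis), and let `ψ₁,…,ψ_r` be the functionals killing `A` and dual to the basis of `B`.
Then the iterated contraction `Ψ = ψ₁∧⋯∧ψ_r : ⋀^{r+1}M → M` maps onto `A`:
(1) every value of `Ψ` lies in `A`; (2) every element of `A` is a value of `Ψ`;
(3) on the summand `A ⊗ ⋀^r B` (spanned by wedges `a ∧ b₁ ∧ ⋯ ∧ b_r`), `Ψ` is, up to a
sign, the identity of `A`; (4) `Ψ` kills the summands `⋀^p A ⊗ ⋀^q B` with `p ≥ 2`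
(wedges with two entries from `A`). -/
theorem contraction_onto_complement
    {R : Type*} [CommRing R] {A : Type*} [AddCommGroup A] [Module R A] (r : ℕ)
    (ψ : Fin r → ((A × (Fin r → R)) →ₗ[R] R))
    (hψ : ∀ i, ψ i = (LinearMap.proj i) ∘ₗ (LinearMap.snd R A (Fin r → R))) :
    (∀ m : Fin (r + 1) → A × (Fin r → R), (iterContraction ψ m).2 = 0) ∧
    (∀ a : A, ∃ m : Fin (r + 1) → A × (Fin r → R), iterContraction ψ m = (a, 0)) ∧
    (∃ ε : ℤ, (ε = 1 ∨ ε = -1) ∧ ∀ a : A,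
      iterContraction ψ
        (Fin.cons (a, 0) (fun j : Fin r => ((0 : A), Pi.single j (1 : R)))) = ε • ((a, 0) : A × (Fin r → R))) ∧
    (∀ m : Fin (r + 1) → A × (Fin r → R),
      (∃ i₁ i₂ : Fin (r + 1), i₁ ≠ i₂ ∧ (m i₁).2 = 0 ∧ (m i₂).2 = 0) →
        iterContraction ψ m = 0) := by
  -- Part (3) computation, done first since part (2) uses it.
  have key : ∀ a : A,
      iterContraction ψ (Fin.cons (a, 0) (fun j : Fin r => ((0 : A), Pi.single j (1 : R))))
        = -(((a, 0)) : A × (Fin r → R)) := by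
    intro a
    set m : Fin (r + 1) → A × (Fin r → R) :=
      Fin.cons (a, 0) (fun j : Fin r => ((0 : A), Pi.single j (1 : R))) with hm
    rw [iterContraction_eq ψ hψ m, Fin.sum_univ_succ]
    have h0 : (Matrix.of fun k j => (m ((0 : Fin (r + 1)).succAbove k)).2 j) =
        (1 : Matrix (Fin r) (Fin r) R) := by
      ext k j
      simp only [Matrix.of_apply, Fin.succAbove_zero, hm, Fin.cons_succ, Matrix.one_apply,
        Pi.single_apply]
      exact if_congr eq_comm rfl rfl
    have hz : ∀ t : Fin r,
        (Matrix.of fun k j => (m ((t.succ).succAbove k)).2 j).det = 0 := by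
      intro t
      apply Matrix.det_eq_zero_of_row_eq_zero (⟨0, t.pos⟩ : Fin r)
      intro j
      have : (t.succ).succAbove (⟨0, t.pos⟩ : Fin r) = 0 := by
        rw [Fin.succAbove_of_castSucc_lt]
        · rfl
        · simpa using t.succ_pos
      simp [this, hm]
    rw [h0]
    simp only [Matrix.det_one, mul_one, pow_one, Fin.val_zero, zero_add, pow_one]
    rw [Finset.sum_eq_zero (fun t _ => by rw [hz t, mul_zero, zero_smul])]
    simp [hm]
  refine ⟨?_, ?_, ?_, ?_⟩
  · -- (1) image lies in A
    intro m
    rw [iterContraction_eq ψ hψ m]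
    rw [Prod.snd_sum]
    funext t
    rw [Finset.sum_apply]
    set P : Matrix (Fin (r + 1)) (Fin (r + 1)) R :=
      Matrix.of fun x y => (m x).2 (Fin.cases t id y) with hPdef
    have hP0 : P.det = 0 := by
      refine Matrix.det_zero_of_column_eq (Fin.succ_ne_zero t).symm fun k => ?_
      simp [hPdef]
    have hexp := Matrix.det_succ_column_zero P
    have hsub : ∀ i : Fin (r + 1), P.submatrix i.succAbove Fin.succ
        = Matrix.of fun k j => (m (i.succAbove k)).2 j := by
      intro i; ext k j; simp [hPdef]
    have hterm : ∀ i : Fin (r + 1), (((-1 : R) ^ ((i : ℕ) + 1) *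
          (Matrix.of fun k j => (m (i.succAbove k)).2 j).det) • (m i).2) t
        = -((-1 : R) ^ (i : ℕ) * P i 0 * (P.submatrix i.succAbove Fin.succ).det) := by
      intro i
      rw [hsub i]
      have hP : P i 0 = (m i).2 t := rfl
      simp only [Pi.smul_apply, smul_eq_mul, hP, pow_succ]
      ring
    simp only [Prod.smul_snd]
    rw [Finset.sum_congr rfl (fun i _ => hterm i), Finset.sum_neg_distrib, ← hexp, hP0, neg_zero]
    rfl
  · -- (2) surjectivity onto A
    intro a
    refine ⟨Fin.cons (-a, 0) (fun j : Fin r => ((0 : A), Pi.single j (1 : R))), ?_⟩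
    rw [key (-a)]
    simp
  · -- (3)
    exact ⟨-1, Or.inr rfl, fun a => by rw [key a]; simp⟩
  · -- (4) two entries from A kill the contraction
    rintro m ⟨i₁, i₂, hne, h1, h2⟩
    rw [iterContraction_eq ψ hψ m]
    refine Finset.sum_eq_zero fun i _ => ?_
    obtain ⟨x, hxne, hx⟩ : ∃ x, x ≠ i ∧ (m x).2 = 0 := by
      by_cases h : i₁ = i
      · exact ⟨i₂, by rw [← h]; exact hne.symm, h2⟩
      · exact ⟨i₁, h, h1⟩
    obtain ⟨k, hk⟩ := Fin.exists_succAbove_eq hxne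
    have : (Matrix.of fun k j => (m (i.succAbove k)).2 j).det = 0 := by
      refine Matrix.det_eq_zero_of_row_eq_zero k fun j => ?_
      simp [hk, hx]
    rw [this, mul_zero, zero_smul]
end
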